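/- arXiv:1403.1274 — 2 statements merged into one kernel-verified Lean document; each statement's English description precedes it below -/
import Mathlib

section
/- Let ξ be an integer-valued random variable with ξ ≥ 1 almost surely, let α ∈ (0,1), and let ζ be distributed as Bin(ξ, α) (conditionally on ξ, ζ is binomial with ξ trials and success probability α). Assume α·E[ξ] > 1. Then the extinction probability q of a Galton–Watson process with offspring distribution ζ satisfies q ≤ (1-α) / (1 - E[(1-α)^ξ] - E[ξ α (1-α)^{ξ-1}]). -/
open MeasureTheory Set

lemma Grec (α : ℝ) (k : ℕ) :
    1 - (1-α)^(k+2) - ((k:ℝ)+2)*α*(1-α)^(k+1)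
      = (1 - (1-α)^(k+1) - ((k:ℝ)+1)*α*(1-α)^k) + ((k:ℝ)+1)*α^2*(1-α)^k := by
  ring

lemma Gnonneg {α : ℝ} (h0 : 0 < α) (h1 : α < 1) :
    ∀ k : ℕ, 0 ≤ 1 - (1-α)^(k+1) - ((k:ℝ)+1)*α*(1-α)^k := by
  intro k
  induction k with
  | zero => norm_num
  | succ k ih =>
    have h := Grec α k
    have ha : (0:ℝ) ≤ 1-α := by linarith
    have hpos : 0 ≤ ((k:ℝ)+1)*α^2*(1-α)^k := by positivity
    push_cast
    push_cast at ih
    nlinarith [h]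

lemma GgeSq {α : ℝ} (h0 : 0 < α) (h1 : α < 1) :
    ∀ k : ℕ, 1 ≤ k → α^2 ≤ 1 - (1-α)^(k+1) - ((k:ℝ)+1)*α*(1-α)^k := by
  intro k hk
  induction k, hk using Nat.le_induction with
  | base => push_cast; nlinarith
  | succ k hk ih =>
    have h := Grec α k
    have ha : (0:ℝ) ≤ 1-α := by linarith
    have hpos : 0 ≤ ((k:ℝ)+1)*α^2*(1-α)^k := by positivity
    push_cast
    push_cast at ih
    nlinarith [h]

lemma polyBound {α x : ℝ} (h0 : 0 < α) (h1 : α < 1) (hx0 : 0 ≤ x) (hx1 : x ≤ 1) :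
    ∀ k : ℕ, ((1-α)+α*x)^(k+1)
      ≤ (1-α)^(k+1) + ((k:ℝ)+1)*α*(1-α)^k*x
        + (1 - (1-α)^(k+1) - ((k:ℝ)+1)*α*(1-α)^k)*x^2 := by
  intro k
  induction k with
  | zero => norm_num
  | succ k ih =>
    have ht0 : 0 ≤ (1-α)+α*x := by nlinarith
    have hG := Gnonneg h0 h1 k
    have hstep : ((1-α)+α*x)^(k+1+1) = ((1-α)+α*x) * ((1-α)+α*x)^(k+1) := by ring
    have h2 : ((1-α)+α*x) * ((1-α)+α*x)^(k+1)
        ≤ ((1-α)+α*x) * ((1-α)^(k+1) + ((k:ℝ)+1)*α*(1-α)^k*x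
            + (1 - (1-α)^(k+1) - ((k:ℝ)+1)*α*(1-α)^k)*x^2) :=
      mul_le_mul_of_nonneg_left ih ht0
    have key : ((1-α)^(k+1+1) + (((k:ℝ)+1)+1)*α*(1-α)^(k+1)*x
          + (1 - (1-α)^(k+1+1) - (((k:ℝ)+1)+1)*α*(1-α)^(k+1))*x^2)
        - ((1-α)+α*x) * ((1-α)^(k+1) + ((k:ℝ)+1)*α*(1-α)^k*x
            + (1 - (1-α)^(k+1) - ((k:ℝ)+1)*α*(1-α)^k)*x^2)
        = α*(1 - (1-α)^(k+1) - ((k:ℝ)+1)*α*(1-α)^k)*x^2*(1-x) := by ring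
    have hnn : 0 ≤ α*(1 - (1-α)^(k+1) - ((k:ℝ)+1)*α*(1-α)^k)*x^2*(1-x) := by
      have h1x : (0:ℝ) ≤ 1 - x := by linarith
      exact mul_nonneg (mul_nonneg (mul_nonneg h0.le hG) (sq_nonneg x)) h1x
    push_cast
    push_cast at h2 key
    linarith [hstep ▸ h2]

lemma p1ub {α : ℝ} (h0 : 0 < α) (h1 : α < 1) (k : ℕ) :
    ((k:ℝ)+1)*α*(1-α)^k ≤ 1 := by
  have := Gnonneg h0 h1 k
  have ha : (0:ℝ) ≤ 1-α := by linarith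
  have : (0:ℝ) ≤ (1-α)^(k+1) := by positivity
  linarith [Gnonneg h0 h1 k]

/-- Let `ξ ≥ 1` be an integer random variable, `α ∈ (0,1)` with `α·E[ξ] > 1`, and let the
offspring distribution `ζ` be `Bin(ξ, α)`. The generating function of `ζ` is
`x ↦ E[((1-α) + αx)^ξ]`, and the extinction probability `q` of the associated
Galton–Watson process (the smallest fixed point of this generating function in `[0,1]`)
satisfies `q ≤ (1-α)/(1 - E[(1-α)^ξ] - E[ξ α (1-α)^(ξ-1)])`. -/
theorem extinction_prob_binomial_mixture_bound
    {Ω : Type*} [MeasurableSpace Ω] (μ : Measure Ω) [IsProbabilityMeasure μ]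
    (ξ : Ω → ℕ) (hmeas : Measurable ξ) (hξ1 : ∀ᵐ ω ∂μ, 1 ≤ ξ ω)
    (hint : Integrable (fun ω => (ξ ω : ℝ)) μ)
    (α : ℝ) (hα : α ∈ Ioo (0:ℝ) 1)
    (hsup : 1 < α * ∫ ω, (ξ ω : ℝ) ∂μ) :
    sInf {x ∈ Icc (0:ℝ) 1 | (∫ ω, ((1 - α) + α * x) ^ (ξ ω) ∂μ) = x}
      ≤ (1 - α) /
        (1 - (∫ ω, (1 - α) ^ (ξ ω) ∂μ)
           - ∫ ω, (ξ ω : ℝ) * α * (1 - α) ^ (ξ ω - 1) ∂μ) := by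
  obtain ⟨hα0, hα1⟩ := hα
  have ha0 : (0:ℝ) < 1 - α := by linarith
  -- helper: integrability of bounded compositions with ξ
  have intcomp : ∀ (h : ℕ → ℝ), (∀ n, |h n| ≤ 1) →
      Integrable (fun ω => h (ξ ω)) μ := by
    intro h hC
    refine (integrable_const (1:ℝ)).mono'
      ((measurable_from_top.comp hmeas).aestronglyMeasurable) ?_
    filter_upwards with ω
    simpa using hC (ξ ω)
  have int_pow : ∀ c : ℝ, |c| ≤ 1 → Integrable (fun ω => c ^ (ξ ω)) μ := by
    intro c hc
    refine intcomp (fun n => c ^ n) (fun n => ?_)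
    rw [abs_pow]
    exact pow_le_one₀ (abs_nonneg c) hc
  have hp1bd : ∀ n : ℕ, |(n:ℝ) * α * (1-α)^(n-1)| ≤ 1 := by
    intro n
    cases n with
    | zero => simp
    | succ k =>
      rw [abs_of_nonneg (by positivity)]
      simpa [Nat.add_sub_cancel, add_mul] using p1ub hα0 hα1 k
  have int_p1 : Integrable (fun ω => (ξ ω : ℝ) * α * (1-α)^(ξ ω - 1)) μ :=
    intcomp _ hp1bd
  have int_a : Integrable (fun ω => (1-α) ^ (ξ ω)) μ :=
    int_pow (1-α) (by rw [abs_of_nonneg ha0.le]; linarith)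
  set p0 := ∫ ω, (1 - α) ^ (ξ ω) ∂μ with hp0def
  set p1 := ∫ ω, (ξ ω : ℝ) * α * (1 - α) ^ (ξ ω - 1) ∂μ with hp1def
  set β := 1 - p0 - p1 with hβdef
  set S := {x ∈ Icc (0:ℝ) 1 | (∫ ω, ((1 - α) + α * x) ^ (ξ ω) ∂μ) = x} with hSdef
  have int_G : Integrable
      (fun ω => 1 - (1-α) ^ (ξ ω) - (ξ ω : ℝ) * α * (1-α)^(ξ ω - 1)) μ :=
    ((integrable_const 1).sub int_a).sub int_p1
  have hGint : ∫ ω, (1 - (1-α) ^ (ξ ω) - (ξ ω : ℝ) * α * (1-α)^(ξ ω - 1)) ∂μ = β := by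
    have e1 : ∫ ω, ((1 - (1-α) ^ (ξ ω)) - (ξ ω : ℝ) * α * (1-α)^(ξ ω - 1)) ∂μ
        = (∫ ω, (1 - (1-α) ^ (ξ ω)) ∂μ) - ∫ ω, (ξ ω : ℝ) * α * (1-α)^(ξ ω - 1) ∂μ :=
      integral_sub ((integrable_const 1).sub int_a) int_p1
    have e2 : ∫ ω, ((1:ℝ) - (1-α) ^ (ξ ω)) ∂μ
        = (∫ _ω, (1:ℝ) ∂μ) - ∫ ω, (1-α) ^ (ξ ω) ∂μ :=
      integral_sub (integrable_const 1) int_a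
    rw [e1, e2, integral_const]
    simp [hβdef, measure_univ]
    rfl
  have hGae : ∀ᵐ ω ∂μ, 0 ≤ 1 - (1-α) ^ (ξ ω) - (ξ ω : ℝ) * α * (1-α)^(ξ ω - 1) := by
    filter_upwards [hξ1] with ω h1
    obtain ⟨k, hk⟩ : ∃ k, ξ ω = k + 1 := ⟨ξ ω - 1, (Nat.succ_pred_eq_of_pos h1).symm⟩
    rw [hk]
    simp only [Nat.add_sub_cancel]
    push_cast
    exact Gnonneg hα0 hα1 k
  -- positivity of β
  have hβpos : 0 < β := by
    rcases lt_or_ge 0 β with h | h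
    · exact h
    exfalso
    have hz : ∫ ω, (1 - (1-α) ^ (ξ ω) - (ξ ω : ℝ) * α * (1-α)^(ξ ω - 1)) ∂μ = 0 := by
      refine le_antisymm (by rw [hGint]; exact h) (integral_nonneg_of_ae hGae)
    have hae0 := (integral_eq_zero_iff_of_nonneg_ae hGae int_G).mp hz
    have hξeq : ∀ᵐ ω ∂μ, (ξ ω : ℝ) = 1 := by
      filter_upwards [hξ1, hae0] with ω h1 h0
      simp only [Pi.zero_apply] at h0
      by_contra hne
      have h2 : 2 ≤ ξ ω := by
        rcases Nat.lt_or_ge (ξ ω) 2 with h | h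
        · interval_cases h' : ξ ω <;> simp_all
        · exact h
      obtain ⟨k, hk⟩ : ∃ k, ξ ω = k + 1 := ⟨ξ ω - 1, (Nat.succ_pred_eq_of_pos h1).symm⟩
      have hk1 : 1 ≤ k := by omega
      have := GgeSq hα0 hα1 k hk1
      rw [hk] at h0
      simp only [Nat.add_sub_cancel] at h0
      push_cast at h0
      nlinarith
    have : ∫ ω, (ξ ω : ℝ) ∂μ = 1 := by
      rw [integral_congr_ae (g := fun _ => (1:ℝ)) hξeq, integral_const]
      simp [measure_univ]
    rw [this] at hsup
    linarith
  have hBpos : 0 < (1-α)/β := div_pos ha0 hβpos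
  have hSbdd : BddBelow S := ⟨0, fun x hx => hx.1.1⟩
  have h1S : (1:ℝ) ∈ S := by
    refine ⟨⟨zero_le_one, le_refl 1⟩, ?_⟩
    have : ∀ ω, ((1 - α) + α * 1) ^ (ξ ω) = (1:ℝ) := by
      intro ω; norm_num
    rw [integral_congr_ae (g := fun _ => (1:ℝ)) (Filter.Eventually.of_forall this),
        integral_const]
    simp [measure_univ]
  rcases le_or_gt 1 ((1-α)/β) with hB | hB1
  · exact le_trans (csInf_le hSbdd h1S) hB
  -- now B < 1
  set B := (1-α)/β with hBdef
  have hβB : β * B = 1 - α := by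
    rw [hBdef]; field_simp
  -- p0 bounds
  have hp0nn : 0 ≤ p0 := integral_nonneg (fun ω => by positivity)
  have hp0le : p0 ≤ 1 - α := by
    have hle : ∀ᵐ ω ∂μ, (1-α) ^ (ξ ω) ≤ 1 - α := by
      filter_upwards [hξ1] with ω h1
      calc (1-α) ^ (ξ ω) ≤ (1-α)^1 := pow_le_pow_of_le_one ha0.le (by linarith) h1
      _ = 1 - α := pow_one _
    have := integral_mono_ae int_a (integrable_const (1-α)) hle
    rwa [integral_const, probReal_univ, one_smul] at this
  -- F and its quadratic upper bound
  set F := fun x : ℝ => ∫ ω, ((1 - α) + α * x) ^ (ξ ω) ∂μ with hFdef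
  have habs : ∀ x : ℝ, 0 ≤ x → x ≤ 1 → |(1 - α) + α * x| ≤ 1 := by
    intro x h0 h1
    rw [abs_of_nonneg (by nlinarith)]
    nlinarith
  have hFle : F B ≤ p0 + p1 * B + β * B^2 := by
    have hB0 := hBpos.le
    have hB1' := hB1.le
    have hpt : ∀ᵐ ω ∂μ, ((1 - α) + α * B) ^ (ξ ω)
        ≤ (1-α) ^ (ξ ω) + (ξ ω : ℝ) * α * (1-α)^(ξ ω - 1) * B
          + (1 - (1-α) ^ (ξ ω) - (ξ ω : ℝ) * α * (1-α)^(ξ ω - 1)) * B^2 := by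
      filter_upwards [hξ1] with ω h1
      obtain ⟨k, hk⟩ : ∃ k, ξ ω = k + 1 := ⟨ξ ω - 1, (Nat.succ_pred_eq_of_pos h1).symm⟩
      rw [hk]
      simp only [Nat.add_sub_cancel]
      push_cast
      exact polyBound hα0 hα1 hB0 hB1' k
    have intR : Integrable (fun ω => (1-α) ^ (ξ ω) + (ξ ω : ℝ) * α * (1-α)^(ξ ω - 1) * B
          + (1 - (1-α) ^ (ξ ω) - (ξ ω : ℝ) * α * (1-α)^(ξ ω - 1)) * B^2) μ :=
      (int_a.add (int_p1.mul_const B)).add (int_G.mul_const (B^2))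
    have h := integral_mono_ae (int_pow _ (habs B hB0 hB1')) intR hpt
    have heq : ∫ ω, ((1-α) ^ (ξ ω) + (ξ ω : ℝ) * α * (1-α)^(ξ ω - 1) * B
          + (1 - (1-α) ^ (ξ ω) - (ξ ω : ℝ) * α * (1-α)^(ξ ω - 1)) * B^2) ∂μ
        = p0 + p1 * B + β * B^2 := by
      have e1 : ∫ ω, (((1-α) ^ (ξ ω) + (ξ ω : ℝ) * α * (1-α)^(ξ ω - 1) * B)
            + (1 - (1-α) ^ (ξ ω) - (ξ ω : ℝ) * α * (1-α)^(ξ ω - 1)) * B^2) ∂μ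
          = (∫ ω, ((1-α) ^ (ξ ω) + (ξ ω : ℝ) * α * (1-α)^(ξ ω - 1) * B) ∂μ)
            + ∫ ω, (1 - (1-α) ^ (ξ ω) - (ξ ω : ℝ) * α * (1-α)^(ξ ω - 1)) * B^2 ∂μ :=
        integral_add (int_a.add (int_p1.mul_const B)) (int_G.mul_const (B^2))
      have e2 : ∫ ω, ((1-α) ^ (ξ ω) + (ξ ω : ℝ) * α * (1-α)^(ξ ω - 1) * B) ∂μ
          = (∫ ω, (1-α) ^ (ξ ω) ∂μ) + ∫ ω, (ξ ω : ℝ) * α * (1-α)^(ξ ω - 1) * B ∂μ :=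
        integral_add int_a (int_p1.mul_const B)
      rw [e1, e2, integral_mul_const, integral_mul_const, hGint]
    rw [heq] at h
    exact h
  have hquad : p0 + p1 * B + β * B^2 ≤ B := by
    have hp1eq : p1 = 1 - p0 - β := by rw [hβdef]; ring
    nlinarith [mul_nonneg (by linarith : (0:ℝ) ≤ 1 - B) (by linarith : 0 ≤ 1 - α - p0), hβB]
  have hFB : F B ≤ B := le_trans hFle hquad
  -- continuity of F on [0, B]
  have hFcont : ContinuousOn F (Icc 0 B) := by
    intro x hx
    refine (MeasureTheory.continuousAt_of_dominated (bound := fun _ => (1:ℝ))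
      ?_ ?_ (integrable_const 1) ?_).continuousWithinAt
    · filter_upwards with x'
      exact (measurable_from_top.comp hmeas).aestronglyMeasurable
    · have hmem : Ioo (-((2-α)/α)) 1 ∈ nhds x := by
        refine Ioo_mem_nhds ?_ (lt_of_le_of_lt hx.2 hB1)
        have : 0 < (2-α)/α := div_pos (by linarith) hα0
        linarith [hx.1]
      filter_upwards [hmem] with x' hx'
      refine Filter.Eventually.of_forall (fun ω => ?_)
      rw [Real.norm_eq_abs, abs_pow]
      refine pow_le_one₀ (abs_nonneg _) (abs_le.mpr ⟨?_, ?_⟩)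
      · have : -((2-α)/α) ≤ x' := hx'.1.le
        have h2 : -(2-α) ≤ α * x' := by
          have := mul_le_mul_of_nonneg_left this hα0.le
          rw [mul_neg, mul_div_cancel₀ _ (ne_of_gt hα0)] at this
          linarith
        linarith
      · nlinarith [hx'.2]
    · refine Filter.Eventually.of_forall (fun ω => ?_)
      exact ((continuous_const.add (continuous_const.mul continuous_id)).pow _).continuousAt
  -- IVT
  have hφcont : ContinuousOn (fun x => F x - x) (Icc 0 B) :=
    hFcont.sub continuousOn_id
  have hF0 : F 0 = p0 := by
    rw [hFdef, hp0def]
    norm_num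
  have hsub := intermediate_value_Icc' hBpos.le hφcont
  have h0mem : (0:ℝ) ∈ Icc (F B - B) (F 0 - 0) := by
    constructor
    · linarith
    · rw [hF0]; linarith
  obtain ⟨c, hc, hφc⟩ := hsub h0mem
  have hFc : F c = c := by
    have h' : F c - c = 0 := hφc
    linarith
  have hcS : c ∈ S := ⟨⟨hc.1, le_trans hc.2 hB1.le⟩, hFc⟩
  exact le_trans (csInf_le hSbdd hcS) hc.2
end

section
/- Under the uniform point model: if r_n ≥ γ √(log n / n), the torus is partitioned into (mkd)² boxes of side r_n'/(2d) with r_n' ≥ r_n/√2, then the probability that some box has point count outside [(1-δ) n r_n'²/(4d²), (1+δ) n r_n'²/(4d²)] is at most 2 (mkd)² n^{-γ²δ²/(24 d²)}; in particular if γ² δ² > 24 d² (1 + o(1) margin, e.g. γ² δ² ≥ 48 d²) this probability tends to 0 as n → ∞. -/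
open MeasureTheory Set Filter
open scoped ENNReal

/-- The box indexed by `p` in the partition of the unit square `[0,1)²` into `b²`
congruent squares of side `1/b`. -/
def unitBox (b : ℕ) (p : Fin b × Fin b) : Set (ℝ × ℝ) :=
  Ico ((p.1 : ℝ) / b) (((p.1 : ℝ) + 1) / b) ×ˢ Ico ((p.2 : ℝ) / b) (((p.2 : ℝ) + 1) / b)

lemma aux_exp_quad {x : ℝ} (hx : |x| ≤ 1) : Real.exp x ≤ 1 + x + 13/18 * x^2 := by
  have h := Real.exp_bound hx (n := 3) (by norm_num)
  have hsum : ∑ m ∈ Finset.range 3, x ^ m / m.factorial = 1 + x + x^2/2 := by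
    simp [Finset.sum_range_succ, Nat.factorial]
  rw [hsum] at h
  have h3 : |x| ^ 3 ≤ x ^ 2 := by
    calc |x| ^ 3 ≤ |x| ^ 2 := pow_le_pow_of_le_one (abs_nonneg x) hx (by norm_num)
    _ = x ^ 2 := sq_abs x
  have h2 := (abs_le.mp h).2
  have hfac : ((Nat.factorial 3 : ℝ)) = 6 := by norm_num [Nat.factorial]
  rw [hfac] at h2
  push_cast at h2
  nlinarith

open ProbabilityTheory in
lemma indicator_chernoff {Ω : Type*} [MeasurableSpace Ω] (μ : Measure Ω) [IsProbabilityMeasure μ]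
    {n : ℕ} (A : Fin n → Set Ω) (hA : ∀ i, MeasurableSet (A i))
    (hindep : ProbabilityTheory.iIndepFun
      (fun i => (A i).indicator (fun _ => (1:ℝ))) μ)
    {q : ℝ} (hq0 : 0 ≤ q) (hq : ∀ i, (μ (A i)).toReal = q)
    {δ : ℝ} (hδ0 : 0 < δ) (hδ1 : δ < 1) :
    μ {ω | ¬((1 - δ) * (n * q) ≤ ∑ i, (A i).indicator (fun _ => (1:ℝ)) ω ∧
        ∑ i, (A i).indicator (fun _ => (1:ℝ)) ω ≤ (1 + δ) * (n * q))}
      ≤ ENNReal.ofReal (2 * Real.exp (-(δ^2) * (n * q) / 3)) := by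
  classical
  set f : Fin n → Ω → ℝ := fun i => (A i).indicator (fun _ => (1:ℝ)) with hf
  set F : Ω → ℝ := ∑ i, f i with hF
  have hFapp : ∀ ω, F ω = ∑ i, f i ω := fun ω => by simp [hF]
  have hfmeas : ∀ i, Measurable (f i) := fun i => measurable_const.indicator (hA i)
  have hFmeas : Measurable F := by
    have hFe : F = fun ω => ∑ i, f i ω := funext hFapp
    rw [hFe]; exact Finset.measurable_sum _ fun i _ => hfmeas i
  have hf01 : ∀ i ω, f i ω = 0 ∨ f i ω = 1 := by
    intro i ω
    by_cases h : ω ∈ A i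
    · right; simp [hf, Set.indicator_of_mem h]
    · left; simp [hf, Set.indicator_of_notMem h]
  have hFrange : ∀ ω, 0 ≤ F ω ∧ F ω ≤ n := by
    intro ω
    rw [hFapp]
    constructor
    · exact Finset.sum_nonneg fun i _ => by rcases hf01 i ω with h | h <;> simp [h]
    · calc ∑ i, f i ω ≤ ∑ _i : Fin n, (1:ℝ) :=
            Finset.sum_le_sum fun i _ => by rcases hf01 i ω with h | h <;> simp [h]
      _ = n := by simp
  have hexp_eq : ∀ (s : ℝ) (i : Fin n),
      (fun ω => Real.exp (s * f i ω)) = fun ω => 1 + (Real.exp s - 1) * f i ω := by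
    intro s i
    funext ω
    rcases hf01 i ω with h | h <;> simp [h]
  have hmgf : ∀ (s : ℝ) (i : Fin n), mgf (f i) μ s = 1 + (Real.exp s - 1) * q := by
    intro s i
    rw [mgf, hexp_eq]
    have hii : ∫ a, (A i).indicator (fun _ => (1:ℝ)) a ∂μ = (μ (A i)).toReal :=
      integral_indicator_one (hA i)
    rw [integral_add (integrable_const 1) (((integrable_const (1:ℝ)).indicator (hA i)).const_mul _),
      integral_const, integral_const_mul, hii, hq i]
    simp
  have hmgfF : ∀ s : ℝ, mgf F μ s ≤ Real.exp (n * q * (Real.exp s - 1)) := by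
    intro s
    rw [hF, hindep.mgf_sum hfmeas]
    have hfac : ∀ i : Fin n, mgf (f i) μ s ≤ Real.exp (q * (Real.exp s - 1)) := by
      intro i
      rw [hmgf s i]
      calc 1 + (Real.exp s - 1) * q = (Real.exp s - 1) * q + 1 := by ring
      _ ≤ Real.exp ((Real.exp s - 1) * q) := Real.add_one_le_exp _
      _ = Real.exp (q * (Real.exp s - 1)) := by rw [mul_comm]
    have hnonneg : ∀ i : Fin n, 0 ≤ mgf (f i) μ s := fun i => mgf_nonneg
    calc ∏ i, mgf (f i) μ s ≤ ∏ _i : Fin n, Real.exp (q * (Real.exp s - 1)) :=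
          Finset.prod_le_prod (fun i _ => hnonneg i) (fun i _ => hfac i)
    _ = Real.exp (q * (Real.exp s - 1)) ^ n := by simp
    _ = Real.exp (n * (q * (Real.exp s - 1))) := by rw [← Real.exp_nat_mul]
    _ = Real.exp (n * q * (Real.exp s - 1)) := by ring_nf
  set t : ℝ := 3/5 * δ with ht
  have ht0 : 0 ≤ t := by positivity
  have ht1 : |t| ≤ 1 := by rw [abs_of_nonneg ht0]; nlinarith
  have ht1' : |(-t)| ≤ 1 := by rwa [abs_neg]
  set m : ℝ := n * q with hm
  have hm0 : 0 ≤ m := by positivity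
  have key1 : Real.exp t - 1 - t * (1 + δ) ≤ -(δ^2) / 3 := by
    have := aux_exp_quad ht1
    nlinarith
  have key2 : Real.exp (-t) - 1 + t * (1 - δ) ≤ -(δ^2) / 3 := by
    have := aux_exp_quad ht1'
    nlinarith
  have hintF : ∀ s : ℝ, Integrable (fun ω => Real.exp (s * F ω)) μ := by
    intro s
    refine (integrable_const (Real.exp (|s| * n))).mono'
      ((hFmeas.const_mul s).exp.aestronglyMeasurable) (ae_of_all _ fun ω => ?_)
    rw [Real.norm_eq_abs, Real.abs_exp]
    apply Real.exp_le_exp.mpr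
    calc s * F ω ≤ |s * F ω| := le_abs_self _
    _ = |s| * |F ω| := abs_mul _ _
    _ ≤ |s| * n := by
        apply mul_le_mul_of_nonneg_left _ (abs_nonneg s)
        rw [abs_of_nonneg (hFrange ω).1]; exact (hFrange ω).2
  have hup : (μ {ω | (1 + δ) * m ≤ F ω}).toReal ≤ Real.exp (-(δ^2) * m / 3) := by
    calc (μ {ω | (1 + δ) * m ≤ F ω}).toReal
        ≤ Real.exp (-t * ((1 + δ) * m)) * mgf F μ t :=
          measure_ge_le_exp_mul_mgf _ ht0 (hintF t)
    _ ≤ Real.exp (-t * ((1 + δ) * m)) * Real.exp (m * (Real.exp t - 1)) := by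
        exact mul_le_mul_of_nonneg_left (by rw [hm]; exact (by rw [show m * (Real.exp t - 1) = n * q * (Real.exp t - 1) from by rw [hm]] at *; exact hmgfF t)) (Real.exp_nonneg _)
    _ = Real.exp (m * (Real.exp t - 1 - t * (1 + δ))) := by
        rw [← Real.exp_add]; ring_nf
    _ ≤ Real.exp (-(δ^2) * m / 3) := by
        apply Real.exp_le_exp.mpr
        calc m * (Real.exp t - 1 - t * (1 + δ)) ≤ m * (-(δ^2)/3) :=
              mul_le_mul_of_nonneg_left key1 hm0
        _ = -(δ^2) * m / 3 := by ring
  have hlo : (μ {ω | F ω ≤ (1 - δ) * m}).toReal ≤ Real.exp (-(δ^2) * m / 3) := by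
    calc (μ {ω | F ω ≤ (1 - δ) * m}).toReal
        ≤ Real.exp (-(-t) * ((1 - δ) * m)) * mgf F μ (-t) :=
          measure_le_le_exp_mul_mgf _ (neg_nonpos.mpr ht0) (hintF (-t))
    _ ≤ Real.exp (-(-t) * ((1 - δ) * m)) * Real.exp (m * (Real.exp (-t) - 1)) := by
        exact mul_le_mul_of_nonneg_left (by rw [hm]; exact hmgfF (-t)) (Real.exp_nonneg _)
    _ = Real.exp (m * (Real.exp (-t) - 1 + t * (1 - δ))) := by
        rw [← Real.exp_add]; ring_nf
    _ ≤ Real.exp (-(δ^2) * m / 3) := by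
        apply Real.exp_le_exp.mpr
        calc m * (Real.exp (-t) - 1 + t * (1 - δ)) ≤ m * (-(δ^2)/3) :=
              mul_le_mul_of_nonneg_left key2 hm0
        _ = -(δ^2) * m / 3 := by ring
  have hsub : {ω | ¬((1 - δ) * m ≤ F ω ∧ F ω ≤ (1 + δ) * m)}
      ⊆ {ω | F ω ≤ (1 - δ) * m} ∪ {ω | (1 + δ) * m ≤ F ω} := by
    intro ω hω
    simp only [Set.mem_setOf_eq, not_and_or, not_le] at hω
    rcases hω with h | h
    · exact Or.inl h.le
    · exact Or.inr h.le
  have hle1 : μ {ω | F ω ≤ (1 - δ) * m} ≤ ENNReal.ofReal (Real.exp (-(δ^2) * m / 3)) :=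
    (ENNReal.le_ofReal_iff_toReal_le (measure_ne_top μ _) (Real.exp_nonneg _)).mpr hlo
  have hle2 : μ {ω | (1 + δ) * m ≤ F ω} ≤ ENNReal.ofReal (Real.exp (-(δ^2) * m / 3)) :=
    (ENNReal.le_ofReal_iff_toReal_le (measure_ne_top μ _) (Real.exp_nonneg _)).mpr hup
  calc μ {ω | ¬((1 - δ) * (n * q) ≤ ∑ i, (A i).indicator (fun _ => (1:ℝ)) ω ∧
        ∑ i, (A i).indicator (fun _ => (1:ℝ)) ω ≤ (1 + δ) * (n * q))}
      = μ {ω | ¬((1 - δ) * m ≤ F ω ∧ F ω ≤ (1 + δ) * m)} := by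
        congr 1; ext ω; simp [hFapp, hm, hf]
    _ ≤ μ ({ω | F ω ≤ (1 - δ) * m} ∪ {ω | (1 + δ) * m ≤ F ω}) := measure_mono hsub
    _ ≤ μ {ω | F ω ≤ (1 - δ) * m} + μ {ω | (1 + δ) * m ≤ F ω} := measure_union_le _ _
    _ ≤ ENNReal.ofReal (Real.exp (-(δ^2) * m / 3)) + ENNReal.ofReal (Real.exp (-(δ^2) * m / 3)) :=
        add_le_add hle1 hle2
    _ = ENNReal.ofReal (2 * Real.exp (-(δ^2) * (n * q) / 3)) := by
        rw [← ENNReal.ofReal_add (Real.exp_nonneg _) (Real.exp_nonneg _)]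
        rw [hm]; congr 1; ring


set_option maxHeartbeats 2000000 in
/-- Uniform point model with `r_n ≥ γ √(log n / n)`: the torus is partitioned into
`(mkd)²` boxes of side `r_n'/(2d)` (where `m = ⌈2/(k r_n)⌉`, `r_n' = 2/(km)`, and
`r_n' ≥ r_n/√2`). The probability that some box has point count outside
`[(1-δ) n r_n'²/(4d²), (1+δ) n r_n'²/(4d²)]` is at most
`2 (mkd)² n^(-γ²δ²/(24d²))`; in particular if `γ²δ² ≥ 48 d²` this probability tends
to `0` as `n → ∞`. -/
theorem all_cells_delta_good
    {Ω : Type*} [MeasurableSpace Ω] (μ : Measure Ω) [IsProbabilityMeasure μ]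
    (k d : ℕ) (hk : 0 < k) (hd : 0 < d) (γ δ : ℝ) (hγ : 0 < γ) (hδ : δ ∈ Ioo (0:ℝ) 1)
    (r : ℕ → ℝ) (hrpos : ∀ n, 0 < r n)
    (hr : ∀ n : ℕ, γ * Real.sqrt (Real.log n / n) ≤ r n)
    (X : (n : ℕ) → Fin n → Ω → ℝ × ℝ)
    (hmeas : ∀ n i, Measurable (X n i))
    (hindep : ∀ n, ProbabilityTheory.iIndepFun (X n) μ)
    (hdist : ∀ n i, μ.map (X n i) = volume.restrict (Icc (0:ℝ) 1 ×ˢ Icc (0:ℝ) 1))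
    (M : ℕ → ℕ) (hM : ∀ n, M n = ⌈2 / ((k : ℝ) * r n)⌉₊ * k * d)
    (r' : ℕ → ℝ) (hr' : ∀ n, r' n = 2 / ((k : ℝ) * (⌈2 / ((k : ℝ) * r n)⌉₊ : ℝ)))
    (hrr' : ∀ n, r n / Real.sqrt 2 ≤ r' n)
    (bad : ℕ → Set Ω)
    (hbad : ∀ n, bad n = {ω | ∃ p : Fin (M n) × Fin (M n),
        ¬((1 - δ) * n * (r' n) ^ 2 / (4 * (d : ℝ) ^ 2)
            ≤ (Nat.card {i : Fin n | X n i ω ∈ unitBox (M n) p} : ℝ)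
          ∧ (Nat.card {i : Fin n | X n i ω ∈ unitBox (M n) p} : ℝ)
            ≤ (1 + δ) * n * (r' n) ^ 2 / (4 * (d : ℝ) ^ 2))}) :
    (∀ n : ℕ, μ (bad n)
        ≤ ENNReal.ofReal (2 * ((M n : ℝ)) ^ 2
            * (n : ℝ) ^ (-(γ ^ 2 * δ ^ 2) / (24 * (d : ℝ) ^ 2))))
    ∧ (48 * (d : ℝ) ^ 2 ≤ γ ^ 2 * δ ^ 2 →
        Tendsto (fun n => μ (bad n)) atTop (nhds 0)) := by
  classical
  obtain ⟨hδ0, hδ1⟩ := hδ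
  have hd0 : (0:ℝ) < (d:ℝ) := by exact_mod_cast hd
  have hk0 : (0:ℝ) < (k:ℝ) := by exact_mod_cast hk
  have key : ∀ n : ℕ, μ (bad n)
      ≤ ENNReal.ofReal (2 * ((M n : ℝ)) ^ 2
          * (n : ℝ) ^ (-(γ ^ 2 * δ ^ 2) / (24 * (d : ℝ) ^ 2))) := by
    intro n
    rcases Nat.eq_zero_or_pos n with hn0 | hn
    · subst hn0
      have hempty : bad 0 = ∅ := by
        rw [hbad]
        ext ω
        simp only [Set.mem_setOf_eq, Set.mem_empty_iff_false, iff_false, not_exists, not_not]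
        intro p
        have hc : (Nat.card {i : Fin 0 | X 0 i ω ∈ unitBox (M 0) p}) = 0 := by
          simp
        rw [hc]
        norm_num
      rw [hempty]
      simp
    · -- n ≥ 1
      have hn1 : (1:ℝ) ≤ (n:ℝ) := by exact_mod_cast hn
      have hnR : (0:ℝ) < (n:ℝ) := by linarith
      have hm₀pos : 0 < ⌈2 / ((k : ℝ) * r n)⌉₊ :=
        Nat.ceil_pos.mpr (div_pos two_pos (mul_pos hk0 (hrpos n)))
      have hm₀R : (0:ℝ) < (⌈2 / ((k : ℝ) * r n)⌉₊ : ℝ) := by exact_mod_cast hm₀pos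
      have hMn := hM n
      have hMpos : 0 < M n := by rw [hMn]; positivity
      have hMR : (0:ℝ) < (M n : ℝ) := by exact_mod_cast hMpos
      obtain ⟨q, hqdef⟩ : ∃ q : ℝ, q = (1 / (M n : ℝ))^2 := ⟨_, rfl⟩
      have hq0 : 0 ≤ q := by rw [hqdef]; positivity
      have hq_r' : (r' n)^2 / (4 * (d:ℝ)^2) = q := by
        rw [hqdef, hr' n, hMn]
        push_cast
        field_simp
        ring
      have hBmeas : ∀ p : Fin (M n) × Fin (M n), MeasurableSet (unitBox (M n) p) :=
        fun p => measurableSet_Ico.prod measurableSet_Ico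
      have hBsub : ∀ p : Fin (M n) × Fin (M n),
          unitBox (M n) p ⊆ Icc (0:ℝ) 1 ×ˢ Icc (0:ℝ) 1 := by
        intro p
        rintro ⟨x, y⟩ ⟨hx, hy⟩
        rw [Set.mem_Ico] at hx hy
        constructor
        · constructor
          · exact le_trans (by positivity) hx.1
          · refine le_trans hx.2.le ?_
            rw [div_le_one hMR]
            exact_mod_cast Nat.succ_le_of_lt p.1.isLt
        · constructor
          · exact le_trans (by positivity) hy.1
          · refine le_trans hy.2.le ?_
            rw [div_le_one hMR]
            exact_mod_cast Nat.succ_le_of_lt p.2.isLt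
      have hvol : ∀ (p : Fin (M n) × Fin (M n)) (i : Fin n),
          (μ (X n i ⁻¹' unitBox (M n) p)).toReal = q := by
        intro p i
        have h1 : μ (X n i ⁻¹' unitBox (M n) p) = (μ.map (X n i)) (unitBox (M n) p) :=
          (Measure.map_apply (hmeas n i) (hBmeas p)).symm
        rw [h1, hdist n i, Measure.restrict_apply (hBmeas p),
          Set.inter_eq_self_of_subset_left (hBsub p)]
        rw [unitBox, Measure.volume_eq_prod, Measure.prod_prod, Real.volume_Ico, Real.volume_Ico]
        have e1 : ((p.1:ℝ)+1)/(M n:ℝ) - (p.1:ℝ)/(M n:ℝ) = 1/(M n:ℝ) := by ring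
        have e2 : ((p.2:ℝ)+1)/(M n:ℝ) - (p.2:ℝ)/(M n:ℝ) = 1/(M n:ℝ) := by ring
        rw [e1, e2, ← ENNReal.ofReal_mul (by positivity),
          ENNReal.toReal_ofReal (by positivity), hqdef]
        ring
      have hindB : ∀ p : Fin (M n) × Fin (M n), ProbabilityTheory.iIndepFun
          (fun i => (X n i ⁻¹' unitBox (M n) p).indicator (fun _ => (1:ℝ))) μ := by
        intro p
        have heq : (fun i : Fin n => (X n i ⁻¹' unitBox (M n) p).indicator (fun _ => (1:ℝ)))
            = fun i => ((unitBox (M n) p).indicator (fun _ => (1:ℝ))) ∘ (X n i) := by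
          funext i ω
          by_cases h : X n i ω ∈ unitBox (M n) p
          · rw [Function.comp_apply, Set.indicator_of_mem h,
              Set.indicator_of_mem (Set.mem_preimage.mpr h)]
          · rw [Function.comp_apply, Set.indicator_of_notMem h,
              Set.indicator_of_notMem (fun hh => h (Set.mem_preimage.mp hh))]
        rw [heq]
        exact (hindep n).comp _ (fun _ => measurable_const.indicator (hBmeas p))
      have hcher : ∀ p : Fin (M n) × Fin (M n),
          μ {ω | ¬((1 - δ) * ((n:ℝ) * q)
              ≤ ∑ i, (X n i ⁻¹' unitBox (M n) p).indicator (fun _ => (1:ℝ)) ω ∧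
            ∑ i, (X n i ⁻¹' unitBox (M n) p).indicator (fun _ => (1:ℝ)) ω
              ≤ (1 + δ) * ((n:ℝ) * q))}
          ≤ ENNReal.ofReal (2 * Real.exp (-(δ^2) * ((n:ℝ) * q) / 3)) :=
        fun p => indicator_chernoff μ _ (fun i => (hmeas n i) (hBmeas p)) (hindB p)
          hq0 (hvol p) hδ0 hδ1
      have hcard : ∀ (ω : Ω) (p : Fin (M n) × Fin (M n)),
          (Nat.card {i : Fin n | X n i ω ∈ unitBox (M n) p} : ℝ)
          = ∑ i, (X n i ⁻¹' unitBox (M n) p).indicator (fun _ => (1:ℝ)) ω := by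
        intro ω p
        have h1 : (Nat.card {i : Fin n | X n i ω ∈ unitBox (M n) p} : ℝ)
            = ∑ i, if X n i ω ∈ unitBox (M n) p then (1:ℝ) else 0 := by
          rw [Nat.card_eq_fintype_card, Fintype.card_subtype, Finset.card_filter]
          push_cast
          apply Finset.sum_congr rfl
          intro i _
          simp [Set.mem_setOf_eq]
        rw [h1]
        apply Finset.sum_congr rfl
        intro i _
        by_cases h : X n i ω ∈ unitBox (M n) p
        · simp [h, Set.indicator_of_mem (Set.mem_preimage.mpr h)]
        · simp [h, Set.indicator_of_notMem (fun hh => h (Set.mem_preimage.mp hh))]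
      have hbound_eq : ∀ s : ℝ, s * (n:ℝ) * (r' n)^2 / (4*(d:ℝ)^2) = s * ((n:ℝ) * q) := by
        intro s; rw [← hq_r']; ring
      have hbadeq : bad n = ⋃ p : Fin (M n) × Fin (M n),
          {ω | ¬((1 - δ) * ((n:ℝ) * q)
              ≤ ∑ i, (X n i ⁻¹' unitBox (M n) p).indicator (fun _ => (1:ℝ)) ω ∧
            ∑ i, (X n i ⁻¹' unitBox (M n) p).indicator (fun _ => (1:ℝ)) ω
              ≤ (1 + δ) * ((n:ℝ) * q))} := by
        rw [hbad]
        ext ω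
        simp only [Set.mem_setOf_eq, Set.mem_iUnion]
        refine exists_congr fun p => not_congr (and_congr ?_ ?_)
        · rw [hcard ω p, hbound_eq (1 - δ)]
        · rw [hcard ω p, hbound_eq (1 + δ)]
      -- exponent comparison
      have hlog0 : 0 ≤ Real.log n := Real.log_nonneg hn1
      have hrsq : γ^2 * (Real.log n / n) ≤ (r n)^2 := by
        have h := hr n
        have h0 : 0 ≤ γ * Real.sqrt (Real.log n / n) := by positivity
        have hs : Real.sqrt (Real.log n / n)^2 = Real.log n / n :=
          Real.sq_sqrt (by positivity)
        nlinarith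
      have hr'sq : (r n)^2 / 2 ≤ (r' n)^2 := by
        have h := hrr' n
        have h0 : 0 ≤ r n / Real.sqrt 2 := div_nonneg (hrpos n).le (Real.sqrt_nonneg 2)
        have hs : Real.sqrt 2 ^ 2 = 2 := Real.sq_sqrt (by norm_num)
        have h2 : (r n / Real.sqrt 2)^2 = (r n)^2/2 := by rw [div_pow, hs]
        nlinarith
      have hnq : γ^2 * Real.log n ≤ 8 * (d:ℝ)^2 * ((n:ℝ) * q) := by
        have h3 : γ^2 * Real.log n ≤ (n:ℝ) * (r n)^2 := by
          have := mul_le_mul_of_nonneg_left hrsq hnR.le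
          calc γ^2 * Real.log n = (n:ℝ) * (γ^2 * (Real.log n / n)) := by
                field_simp
          _ ≤ (n:ℝ) * (r n)^2 := this
        have h4 : (n:ℝ) * (r n)^2 ≤ 2 * ((n:ℝ) * (r' n)^2) := by nlinarith
        have hq4d : 4*(d:ℝ)^2 * q = (r' n)^2 := by
          rw [← hq_r', mul_comm, div_mul_eq_mul_div, mul_div_assoc,
            div_self (by positivity : (4*(d:ℝ)^2) ≠ 0), mul_one]
        have e5 : (n:ℝ) * (4*(d:ℝ)^2*q) = (n:ℝ)*(r' n)^2 := by rw [hq4d]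
        linarith [h3, h4, e5]
      have hexp_le : Real.exp (-(δ^2) * ((n:ℝ)*q) / 3)
          ≤ (n:ℝ) ^ (-(γ^2*δ^2)/(24*(d:ℝ)^2)) := by
        rw [Real.rpow_def_of_pos hnR]
        apply Real.exp_le_exp.mpr
        have hd2 : (0:ℝ) < (d:ℝ)^2 := by positivity
        rw [show Real.log n * (-(γ^2*δ^2)/(24*(d:ℝ)^2))
            = -(γ^2 * δ^2 * Real.log n / (24*(d:ℝ)^2)) from by ring,
          show -(δ^2) * ((n:ℝ)*q) / 3 = -(δ^2 * ((n:ℝ)*q) / 3) from by ring,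
          neg_le_neg_iff, div_le_div_iff₀ (by positivity) (by norm_num)]
        nlinarith [mul_le_mul_of_nonneg_left hnq (show (0:ℝ) ≤ δ^2 by positivity)]
      -- union bound
      rw [hbadeq]
      refine le_trans (measure_iUnion_le _) ?_
      rw [tsum_fintype]
      refine le_trans (Finset.sum_le_sum fun p _ => hcher p) ?_
      rw [Finset.sum_const, Finset.card_univ]
      have hcardP : (Fintype.card (Fin (M n) × Fin (M n))) = M n * M n := by
        simp
      rw [hcardP, nsmul_eq_mul]
      have hofr : ((M n * M n : ℕ) : ℝ≥0∞) * ENNReal.ofReal (2 * Real.exp (-(δ^2) * ((n:ℝ)*q) / 3))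
          = ENNReal.ofReal (((M n * M n : ℕ) : ℝ) * (2 * Real.exp (-(δ^2) * ((n:ℝ)*q) / 3))) := by
        rw [← ENNReal.ofReal_natCast, ← ENNReal.ofReal_mul (by positivity)]
      rw [hofr]
      apply ENNReal.ofReal_le_ofReal
      push_cast
      calc (M n:ℝ) * (M n:ℝ) * (2 * Real.exp (-(δ^2) * ((n:ℝ)*q) / 3))
          = 2 * (M n:ℝ)^2 * Real.exp (-(δ^2) * ((n:ℝ)*q) / 3) := by ring
      _ ≤ 2 * (M n:ℝ)^2 * ((n:ℝ) ^ (-(γ^2*δ^2)/(24*(d:ℝ)^2))) := by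
          apply mul_le_mul_of_nonneg_left hexp_le (by positivity)
  refine ⟨key, fun hγδ => ?_⟩
  have he2 : (-(γ^2*δ^2)/(24*(d:ℝ)^2)) ≤ -2 := by
    rw [neg_div, show (-2:ℝ) = -(2:ℝ) from rfl, neg_le_neg_iff, le_div_iff₀ (by positivity)]
    linarith
  set C : ℝ := 2*(d:ℝ)/γ + (k:ℝ)*(d:ℝ) with hC
  have hC0 : 0 < C := by positivity
  have hbound : ∀ᶠ n : ℕ in atTop,
      2 * ((M n : ℝ)) ^ 2 * (n : ℝ) ^ (-(γ^2*δ^2)/(24*(d:ℝ)^2)) ≤ 2*C^2/(n:ℝ) := by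
    filter_upwards [eventually_ge_atTop 3] with n hn3
    have hn1 : (1:ℝ) ≤ (n:ℝ) := by exact_mod_cast le_trans (by norm_num) hn3
    have hnR : (0:ℝ) < (n:ℝ) := by linarith
    have hlog1 : 1 ≤ Real.log n := by
      rw [Real.le_log_iff_exp_le hnR]
      calc Real.exp 1 ≤ 2.7182818286 := Real.exp_one_lt_d9.le
      _ ≤ 3 := by norm_num
      _ ≤ (n:ℝ) := by exact_mod_cast hn3
    have hsqn0 : 0 < Real.sqrt n := Real.sqrt_pos.mpr hnR
    have hsq : (1:ℝ)/Real.sqrt n ≤ Real.sqrt (Real.log n / n) := by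
      rw [one_div, ← Real.sqrt_inv]
      apply Real.sqrt_le_sqrt
      rw [inv_eq_one_div]
      gcongr
    have hrge : γ / Real.sqrt n ≤ r n := by
      refine le_trans ?_ (hr n)
      rw [div_eq_mul_one_div]
      exact mul_le_mul_of_nonneg_left hsq hγ.le
    have hγsq : (0:ℝ) < γ / Real.sqrt n := by positivity
    have hsqrt1 : 1 ≤ Real.sqrt n := by
      rw [show (1:ℝ) = Real.sqrt 1 from (Real.sqrt_one).symm]
      exact Real.sqrt_le_sqrt hn1
    have hMle : (M n : ℝ) ≤ C * Real.sqrt n := by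
      rw [hM n]
      push_cast
      have hceil : (⌈2/((k:ℝ)*r n)⌉₊ : ℝ) ≤ 2/((k:ℝ)*r n) + 1 :=
        (Nat.ceil_lt_add_one (div_pos two_pos (mul_pos hk0 (hrpos n))).le).le
      calc (⌈2/((k:ℝ)*r n)⌉₊ : ℝ) * (k:ℝ) * (d:ℝ)
          ≤ (2/((k:ℝ)*r n) + 1) * (k:ℝ) * (d:ℝ) := by
            apply mul_le_mul_of_nonneg_right (mul_le_mul_of_nonneg_right hceil hk0.le) hd0.le
      _ = 2*(d:ℝ)/(r n) + (k:ℝ)*(d:ℝ) := by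
          have hrn0 : r n ≠ 0 := (hrpos n).ne'
          field_simp
      _ ≤ 2*(d:ℝ)/(γ/Real.sqrt n) + (k:ℝ)*(d:ℝ) := by
          gcongr
      _ = (2*(d:ℝ)/γ)*Real.sqrt n + (k:ℝ)*(d:ℝ) := by
          rw [div_div_eq_mul_div]
          ring
      _ ≤ (2*(d:ℝ)/γ)*Real.sqrt n + ((k:ℝ)*(d:ℝ))*Real.sqrt n := by
          nth_rewrite 1 [show (k:ℝ)*(d:ℝ) = ((k:ℝ)*(d:ℝ))*1 from (mul_one _).symm]
          gcongr
      _ = C * Real.sqrt n := by rw [hC]; ring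
    have hrpow : (n:ℝ)^(-(γ^2*δ^2)/(24*(d:ℝ)^2)) ≤ (n:ℝ)^(-2:ℝ) :=
      Real.rpow_le_rpow_of_exponent_le hn1 he2
    have hrpow2 : (n:ℝ)^(-2:ℝ) = 1/(n:ℝ)^2 := by
      rw [show (-2:ℝ) = -((2:ℕ):ℝ) from by norm_num, Real.rpow_neg hnR.le,
        Real.rpow_natCast, one_div]
    calc 2 * ((M n : ℝ)) ^ 2 * (n : ℝ) ^ (-(γ^2*δ^2)/(24*(d:ℝ)^2))
        ≤ 2 * (C * Real.sqrt n)^2 * (n:ℝ)^(-2:ℝ) := by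
          have hM0 : (0:ℝ) ≤ (M n : ℝ) := by positivity
          gcongr
      _ = 2 * C^2 * (Real.sqrt n^2) * (n:ℝ)^(-2:ℝ) := by ring
      _ = 2*C^2/(n:ℝ) := by
          rw [Real.sq_sqrt hnR.le, hrpow2]
          field_simp
  have hg0 : Tendsto (fun n : ℕ => 2*C^2/(n:ℝ)) atTop (nhds 0) :=
    tendsto_const_div_atTop_nhds_zero_nat _
  have hgle : Tendsto (fun n : ℕ => 2 * ((M n : ℝ)) ^ 2
      * (n : ℝ) ^ (-(γ^2*δ^2)/(24*(d:ℝ)^2))) atTop (nhds 0) := by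
    apply squeeze_zero' (Eventually.of_forall fun n => by positivity) hbound hg0
  have hof := ENNReal.tendsto_ofReal hgle
  rw [ENNReal.ofReal_zero] at hof
  exact tendsto_of_tendsto_of_tendsto_of_le_of_le tendsto_const_nhds hof
    (fun n => zero_le) (fun n => key n)
end
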